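/- (Tender operator lemma) Let ρ be a density operator on ℂ^D and X a positive semidefinite operator with X ≤ I and 1 − Tr(ρX) ≤ λ ≤ 1. Then ‖ρ − √X ρ √X‖₁ ≤ √(8λ), where √X is the positive semidefinite square root of X. -/

import Mathlib

open scoped ComplexOrder Matrix

namespace QIT

variable {d : ℕ}

/-- The positive semidefinite square root of a positive semidefinite matrix
(the definition `Matrix.PosSemidef.sqrt` of the older Mathlib, since removed). -/
noncomputable def _root_.Matrix.PosSemidef.sqrt {n : Type*} [Fintype n] [DecidableEq n]
    {A : Matrix n n ℂ} (hA : A.PosSemidef) : Matrix n n ℂ :=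
  hA.1.eigenvectorUnitary.1 * Matrix.diagonal ((↑) ∘ (√·) ∘ hA.1.eigenvalues) *
    (star hA.1.eigenvectorUnitary : Matrix n n ℂ)

/-- A density operator: positive semidefinite with trace 1. -/
def IsDensity (ρ : Matrix (Fin d) (Fin d) ℂ) : Prop :=
  ρ.PosSemidef ∧ ρ.trace = 1

/-- A pure state: a rank-one orthogonal projection. -/
def IsPure (ρ : Matrix (Fin d) (Fin d) ℂ) : Prop :=
  ρ.IsHermitian ∧ ρ * ρ = ρ ∧ ρ.rank = 1

/-- Trace norm of a matrix: `Tr √(Aᴴ A)`. -/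
noncomputable def traceNorm (A : Matrix (Fin d) (Fin d) ℂ) : ℝ :=
  ((Matrix.posSemidef_conjTranspose_mul_self A).sqrt.trace).re

section Helpers

variable {n : Type*} [Fintype n] [DecidableEq n]

open scoped MatrixOrder in
lemma _root_.Matrix.PosSemidef.sqrt_eq_CFC {A : Matrix n n ℂ} (hA : A.PosSemidef) :
    hA.sqrt = CFC.sqrt A := by
  rw [CFC.sqrt_eq_real_sqrt A (Matrix.nonneg_iff_posSemidef.mpr hA), cfcₙ_eq_cfc, hA.1.cfc_eq]
  simp only [Matrix.IsHermitian.cfc, Unitary.conjStarAlgAut_apply]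
  rfl

open scoped MatrixOrder in
lemma _root_.Matrix.PosSemidef.posSemidef_sqrt {A : Matrix n n ℂ} (hA : A.PosSemidef) :
    hA.sqrt.PosSemidef := by
  rw [hA.sqrt_eq_CFC]
  exact Matrix.nonneg_iff_posSemidef.mp (CFC.sqrt_nonneg A)

open scoped MatrixOrder in
lemma _root_.Matrix.PosSemidef.sqrt_mul_self {A : Matrix n n ℂ} (hA : A.PosSemidef) :
    hA.sqrt * hA.sqrt = A := by
  rw [hA.sqrt_eq_CFC]
  exact CFC.sqrt_mul_sqrt_self A (Matrix.nonneg_iff_posSemidef.mpr hA)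

open scoped MatrixOrder in
lemma _root_.Matrix.PosSemidef.eq_sqrt_of_sq_eq {R B : Matrix n n ℂ} (hR : R.PosSemidef)
    (hB : B.PosSemidef) (h : R ^ 2 = B) : R = hB.sqrt := by
  rw [hB.sqrt_eq_CFC]
  exact (CFC.sqrt_unique (by rw [← h, sq]) (Matrix.nonneg_iff_posSemidef.mpr hR)).symm

lemma trace_re_nonneg' {M : Matrix n n ℂ} (hM : M.PosSemidef) : 0 ≤ M.trace.re := by
  rw [Matrix.trace]
  have : ∀ i, 0 ≤ (M i i).re := by
    intro i
    have h := hM.re_dotProduct_nonneg (Pi.single i 1)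
    simpa [dotProduct, Matrix.mulVec, Pi.single_apply, Finset.sum_ite_eq] using h
  calc (0:ℝ) ≤ ∑ i, (M i i).re := Finset.sum_nonneg fun i _ => this i
    _ = (∑ i, M.diag i).re := by simp [Complex.re_sum, Matrix.diag]

lemma trace_mul_re_nonneg {A B : Matrix n n ℂ} (hA : A.PosSemidef) (hB : B.PosSemidef) :
    0 ≤ ((A * B).trace).re := by
  have hs : hA.sqrt * hA.sqrt = A := hA.sqrt_mul_self
  have hH : hA.sqrt.conjTranspose = hA.sqrt := hA.posSemidef_sqrt.1
  have hpsd : (hA.sqrtᴴ * B * hA.sqrt).PosSemidef := hB.conjTranspose_mul_mul_same hA.sqrt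
  rw [hH] at hpsd
  have key : (hA.sqrt * B * hA.sqrt).trace = (A * B).trace := by
    rw [Matrix.mul_assoc, Matrix.trace_mul_comm, Matrix.mul_assoc, hs, Matrix.trace_mul_comm]
  rw [← key]
  exact trace_re_nonneg' hpsd

lemma psd_sub_sq {Y : Matrix n n ℂ} (hY : Y.PosSemidef) (h1 : (1 - Y * Y).PosSemidef) :
    (Y - Y * Y).PosSemidef := by
  have hH := hY.1
  set U : Matrix n n ℂ := (hH.eigenvectorUnitary : Matrix n n ℂ) with hUdef
  have hUU : U * star U = 1 := Matrix.mem_unitaryGroup_iff.mp hH.eigenvectorUnitary.2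
  have hUU' : star U * U = 1 := Matrix.mem_unitaryGroup_iff'.mp hH.eigenvectorUnitary.2
  set ν := hH.eigenvalues with hνdef
  have hspec : Y = U * Matrix.diagonal (RCLike.ofReal ∘ ν) * star U := hH.spectral_theorem
  have hν0 : ∀ i, 0 ≤ ν i := hY.eigenvalues_nonneg
  have hYY : Y * Y = U * Matrix.diagonal (fun i => (ν i : ℂ)^2) * star U := by
    rw [hspec]
    calc U * Matrix.diagonal (RCLike.ofReal ∘ ν) * star U *
          (U * Matrix.diagonal (RCLike.ofReal ∘ ν) * star U)
        = U * (Matrix.diagonal (RCLike.ofReal ∘ ν) * (star U * U) *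
            Matrix.diagonal (RCLike.ofReal ∘ ν)) * star U := by
          simp only [Matrix.mul_assoc]
      _ = U * Matrix.diagonal (fun i => (ν i : ℂ)^2) * star U := by
          rw [hUU', Matrix.mul_one, Matrix.diagonal_mul_diagonal]
          congr 1
          · congr 1; funext i; simp [sq]
  have hν1 : ∀ i, ν i ≤ 1 := by
    intro i
    have hpsdD := h1.conjTranspose_mul_mul_same U
    have hcj : Uᴴ * (1 - Y * Y) * U = Matrix.diagonal (fun i => ((1 - ν i ^ 2 : ℝ) : ℂ)) := by
      rw [Matrix.star_eq_conjTranspose] at hUU hUU'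
      rw [Matrix.mul_sub, Matrix.sub_mul, Matrix.mul_one, hUU', hYY,
        Matrix.star_eq_conjTranspose]
      calc (1 : Matrix n n ℂ) - Uᴴ * (U * Matrix.diagonal (fun i => (ν i : ℂ)^2) * Uᴴ) * U
          = 1 - (Uᴴ * U) * Matrix.diagonal (fun i => (ν i : ℂ)^2) * (Uᴴ * U) := by
            simp only [Matrix.mul_assoc]
        _ = Matrix.diagonal (fun i => ((1 - ν i ^ 2 : ℝ) : ℂ)) := by
            rw [hUU', Matrix.one_mul, Matrix.mul_one, ← Matrix.diagonal_one,
              Matrix.diagonal_sub]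
            congr 1; funext i; push_cast; ring
    rw [hcj, Matrix.posSemidef_diagonal_iff] at hpsdD
    have := hpsdD i
    rw [Complex.zero_le_real] at this
    nlinarith [hν0 i]
  have hd : (Y - Y * Y) = U * Matrix.diagonal (fun i => ((ν i - ν i ^ 2 : ℝ) : ℂ)) * star U := by
    conv_lhs => rw [hYY, hspec]
    rw [← Matrix.sub_mul, ← Matrix.mul_sub, Matrix.diagonal_sub]
    congr 2
    funext i; push_cast; simp [sq]
  rw [hd]
  have hdiag : (Matrix.diagonal (fun i => ((ν i - ν i ^ 2 : ℝ) : ℂ))).PosSemidef := by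
    rw [Matrix.posSemidef_diagonal_iff]
    intro i
    rw [Complex.zero_le_real]
    nlinarith [hν0 i, hν1 i]
  have h2 := hdiag.mul_mul_conjTranspose_same U
  rwa [← Matrix.star_eq_conjTranspose] at h2

lemma trace_conjTranspose_mul (M N : Matrix n n ℂ) :
    (Mᴴ * N).trace = ∑ p : n × n, (starRingEnd ℂ) (M p.1 p.2) * N p.1 p.2 := by
  rw [Matrix.trace]
  simp only [Matrix.diag, Matrix.mul_apply, Matrix.conjTranspose_apply]
  rw [Fintype.sum_prod_type, Finset.sum_comm]
  simp [Complex.star_def]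

lemma trace_CS (A B : Matrix n n ℂ) :
    ‖(Aᴴ * B).trace‖ ≤ Real.sqrt ((Aᴴ * A).trace).re * Real.sqrt ((Bᴴ * B).trace).re := by
  let x : EuclideanSpace ℂ (n × n) := WithLp.toLp 2 (fun p : n × n => A p.1 p.2)
  let y : EuclideanSpace ℂ (n × n) := WithLp.toLp 2 (fun p : n × n => B p.1 p.2)
  have hxy : (Aᴴ * B).trace = inner ℂ x y := by
    rw [trace_conjTranspose_mul]
    simp [x, y, PiLp.inner_apply, RCLike.inner_apply]
    exact Finset.sum_congr rfl fun _ _ => mul_comm _ _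
  have hnrm : ∀ (M : Matrix n n ℂ) (z : EuclideanSpace ℂ (n × n)),
      (∀ p, z p = M p.1 p.2) → Real.sqrt ((Mᴴ * M).trace).re = ‖z‖ := by
    intro M z hz
    rw [EuclideanSpace.norm_eq, trace_conjTranspose_mul]
    congr 1
    rw [Complex.re_sum]
    refine Finset.sum_congr rfl fun p _ => ?_
    rw [hz p]
    simp [Complex.normSq_eq_norm_sq, ← Complex.normSq_eq_conj_mul_self, ← Complex.ofReal_pow]
  rw [hxy, hnrm A x (fun p => rfl), hnrm B y (fun p => rfl)]
  exact norm_inner_le_norm x y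

lemma exists_sign_matrix {A : Matrix n n ℂ} (hA : A.IsHermitian) :
    ∃ S : Matrix n n ℂ, Sᴴ = S ∧ Sᴴ * S = 1 ∧
      (Matrix.posSemidef_conjTranspose_mul_self A).sqrt.trace = (S * A).trace := by
  set U : Matrix n n ℂ := (hA.eigenvectorUnitary : Matrix n n ℂ) with hUdef
  have hUU : U * star U = 1 := Matrix.mem_unitaryGroup_iff.mp hA.eigenvectorUnitary.2
  have hUU' : star U * U = 1 := Matrix.mem_unitaryGroup_iff'.mp hA.eigenvectorUnitary.2
  set e := hA.eigenvalues with hedef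
  have hspec : A = U * Matrix.diagonal (fun i => ((e i : ℝ) : ℂ)) * star U := hA.spectral_theorem
  have hmul : ∀ f g : n → ℂ, (U * Matrix.diagonal f * star U) * (U * Matrix.diagonal g * star U)
      = U * Matrix.diagonal (fun i => f i * g i) * star U := by
    intro f g
    calc U * Matrix.diagonal f * star U * (U * Matrix.diagonal g * star U)
        = U * (Matrix.diagonal f * (star U * U) * Matrix.diagonal g) * star U := by
          simp only [Matrix.mul_assoc]
      _ = U * Matrix.diagonal (fun i => f i * g i) * star U := by
          rw [hUU', Matrix.mul_one, Matrix.diagonal_mul_diagonal]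
  have hherm : ∀ f : n → ℝ, (U * Matrix.diagonal (fun i => (f i : ℂ)) * star U)ᴴ
      = U * Matrix.diagonal (fun i => (f i : ℂ)) * star U := by
    intro f
    rw [Matrix.conjTranspose_mul, Matrix.conjTranspose_mul, Matrix.diagonal_conjTranspose,
      Matrix.star_eq_conjTranspose, Matrix.conjTranspose_conjTranspose]
    have : star (fun i => (f i : ℂ)) = fun i => (f i : ℂ) := by
      funext i; simp [Complex.star_def, Complex.conj_ofReal]
    rw [this, Matrix.mul_assoc]
  have htr : ∀ f : n → ℂ, (U * Matrix.diagonal f * star U).trace = ∑ i, f i := by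
    intro f
    rw [Matrix.trace_mul_comm, ← Matrix.mul_assoc, hUU', Matrix.one_mul, Matrix.trace_diagonal]
  -- the sign function
  set s : n → ℝ := fun i => if e i < 0 then -1 else 1 with hsdef
  refine ⟨U * Matrix.diagonal (fun i => (s i : ℂ)) * star U, hherm s, ?_, ?_⟩
  · rw [hherm s, hmul]
    have : (fun i => (s i : ℂ) * (s i : ℂ)) = fun _ => 1 := by
      funext i; simp only [hsdef]; split_ifs <;> norm_num
    rw [this, Matrix.diagonal_one, Matrix.mul_one, hUU]
  · -- trace of sqrt equals trace of S * A
    set R : Matrix n n ℂ := U * Matrix.diagonal (fun i => ((|e i| : ℝ) : ℂ)) * star U with hRdef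
    have hRpsd : R.PosSemidef := by
      have : (Matrix.diagonal (fun i => ((|e i| : ℝ) : ℂ))).PosSemidef := by
        rw [Matrix.posSemidef_diagonal_iff]
        intro i
        rw [Complex.zero_le_real]
        exact abs_nonneg _
      have h2 := this.mul_mul_conjTranspose_same U
      rwa [← Matrix.star_eq_conjTranspose] at h2
    have hRsq : R ^ 2 = Aᴴ * A := by
      rw [pow_two, hRdef, hmul, hA.eq]
      conv_rhs => rw [hspec]
      rw [hmul]
      have hfg : (fun i => ((|e i| : ℝ) : ℂ) * ((|e i| : ℝ) : ℂ))
          = fun i => ((e i : ℝ) : ℂ) * ((e i : ℝ) : ℂ) := by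
        funext i
        rw [← Complex.ofReal_mul, abs_mul_abs_self, Complex.ofReal_mul]
      rw [hfg]
    have hsqrt : R = (Matrix.posSemidef_conjTranspose_mul_self A).sqrt :=
      hRpsd.eq_sqrt_of_sq_eq (Matrix.posSemidef_conjTranspose_mul_self A) hRsq
    rw [← hsqrt]
    conv_rhs => rw [hspec]
    rw [hmul, hRdef, htr, htr]
    refine Finset.sum_congr rfl fun i _ => ?_
    simp only [Function.comp, hsdef]
    split_ifs with h
    · rw [abs_of_neg h]
      push_cast
      ring
    · rw [abs_of_nonneg (not_lt.mp h)]
      push_cast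
      ring

end Helpers

/-- Tender operator lemma: if `0 ≤ X ≤ I` and `1 − Tr(ρX) ≤ λ ≤ 1`, then
`‖ρ − √X ρ √X‖₁ ≤ √(8λ)`. -/
theorem tender_operator {D : ℕ} (ρ X : Matrix (Fin D) (Fin D) ℂ)
    (hρ : IsDensity ρ) (hX : X.PosSemidef) (hX1 : (1 - X).PosSemidef)
    (lam : ℝ) (hlam : 1 - ((ρ * X).trace).re ≤ lam) (hlam1 : lam ≤ 1) :
    traceNorm (ρ - hX.sqrt * ρ * hX.sqrt) ≤ Real.sqrt (8 * lam) := by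
  obtain ⟨hρp, hρtr⟩ := hρ
  set Y := hX.sqrt with hYdef
  have hYps : Y.PosSemidef := hX.posSemidef_sqrt
  have hYh : Yᴴ = Y := hYps.1
  have hYY : Y * Y = X := hX.sqrt_mul_self
  set B := hρp.sqrt with hBdef
  have hBps : B.PosSemidef := hρp.posSemidef_sqrt
  have hBh : Bᴴ = B := hBps.1
  have hBB : B * B = ρ := hρp.sqrt_mul_self
  set T : Matrix (Fin D) (Fin D) ℂ := 1 - Y with hTdef
  have hTh : Tᴴ = T := by
    rw [hTdef, Matrix.conjTranspose_sub, Matrix.conjTranspose_one, hYh]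
  have hρh : ρᴴ = ρ := hρp.1
  have hAh : (ρ - Y * ρ * Y).IsHermitian := by
    show (ρ - Y * ρ * Y)ᴴ = ρ - Y * ρ * Y
    rw [Matrix.conjTranspose_sub, hρh, Matrix.conjTranspose_mul, Matrix.conjTranspose_mul,
      hρh, hYh, Matrix.mul_assoc]
  obtain ⟨S, hSh, hSS, hStr⟩ := exists_sign_matrix hAh
  have hSS' : S * S = 1 := by rwa [hSh] at hSS
  have htn : traceNorm (ρ - Y * ρ * Y) = ((S * (ρ - Y * ρ * Y)).trace).re := by
    unfold traceNorm
    exact congrArg Complex.re hStr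
  -- positivity facts
  have hTTps : (T * T).PosSemidef := by
    have h := Matrix.posSemidef_conjTranspose_mul_self T
    rwa [hTh] at h
  have hc1nn : 0 ≤ ((T * T * ρ).trace).re := trace_mul_re_nonneg hTTps hρp
  have hYmX : (Y - Y * Y).PosSemidef := psd_sub_sq hYps (by rwa [hYY])
  have hkey : (1 - X) - T * T = (Y - Y * Y) + (Y - Y * Y) := by
    rw [hTdef, ← hYY]; noncomm_ring
  have hdiffps : ((1 - X) - T * T).PosSemidef := by
    rw [hkey]; exact hYmX.add hYmX
  have h2 : 0 ≤ ((((1 - X) - T * T) * ρ).trace).re := trace_mul_re_nonneg hdiffps hρp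
  have hexp : (((1 - X) - T * T) * ρ).trace = (1 : ℂ) - (ρ * X).trace - (T * T * ρ).trace := by
    rw [Matrix.sub_mul, Matrix.sub_mul, Matrix.one_mul, Matrix.trace_sub, Matrix.trace_sub,
      hρtr, Matrix.trace_mul_comm X ρ]
  have hc1le : ((T * T * ρ).trace).re ≤ lam := by
    rw [hexp] at h2
    simp only [Complex.sub_re, Complex.one_re] at h2
    linarith
  have hxρ0 : 0 ≤ ((ρ * X).trace).re := trace_mul_re_nonneg hρp hX
  have hxρ1 : ((ρ * X).trace).re ≤ 1 := by
    have h3 : 0 ≤ ((ρ * (1 - X)).trace).re := trace_mul_re_nonneg hρp hX1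
    rw [Matrix.mul_sub, Matrix.mul_one, Matrix.trace_sub, hρtr] at h3
    simp only [Complex.sub_re, Complex.one_re] at h3
    linarith
  have hlam0 : 0 ≤ lam := le_trans (by linarith) hlam
  -- decomposition
  have hsplit : S * (ρ - Y * ρ * Y) = S * T * ρ + S * Y * ρ * T := by
    rw [hTdef]; noncomm_ring
  -- term 1
  have ht1 : (S * T * ρ).trace = ((S * B)ᴴ * (T * B)).trace := by
    rw [Matrix.conjTranspose_mul, hSh, hBh, ← hBB]
    have h := Matrix.trace_mul_comm (S * T * B) B
    simp only [Matrix.mul_assoc] at h ⊢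
    exact h
  have hn1 : (((S * B)ᴴ * (S * B)).trace).re = 1 := by
    have : ((S * B)ᴴ * (S * B)).trace = 1 := by
      rw [Matrix.conjTranspose_mul, hSh, hBh]
      calc (B * S * (S * B)).trace = (B * (S * S) * B).trace := by
            simp only [Matrix.mul_assoc]
        _ = (B * B).trace := by rw [hSS', Matrix.mul_one]
        _ = 1 := by rw [hBB, hρtr]
    rw [this]; simp
  have hn2 : (((T * B)ᴴ * (T * B)).trace) = (T * T * ρ).trace := by
    rw [Matrix.conjTranspose_mul, hTh, hBh, ← hBB]
    have h := Matrix.trace_mul_comm B (T * (T * B))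
    simp only [Matrix.mul_assoc] at h ⊢
    exact h
  -- term 2
  have ht2 : (S * Y * ρ * T).trace = ((T * B)ᴴ * (S * (Y * B))).trace := by
    rw [Matrix.conjTranspose_mul, hTh, hBh, ← hBB]
    have h := Matrix.trace_mul_comm (S * (Y * B)) (B * T)
    simp only [Matrix.mul_assoc] at h ⊢
    exact h
  have hn3 : ((S * (Y * B))ᴴ * (S * (Y * B))).trace = (ρ * X).trace := by
    rw [← hBB, ← hYY, Matrix.conjTranspose_mul, Matrix.conjTranspose_mul, hSh, hYh, hBh]
    have hScancel : S * (S * (Y * B)) = Y * B := by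
      rw [← Matrix.mul_assoc, hSS', Matrix.one_mul]
    have h1 := Matrix.trace_mul_comm (B * B) (Y * Y)
    have h2 := Matrix.trace_mul_comm B (Y * (Y * B))
    simp only [Matrix.mul_assoc] at h1 h2 ⊢
    rw [hScancel]
    exact h2.trans h1.symm
  -- Cauchy-Schwarz bounds
  have hb1 : ‖(S * T * ρ).trace‖ ≤ Real.sqrt (((T * T * ρ).trace).re) := by
    rw [ht1]
    have h := trace_CS (S * B) (T * B)
    rw [hn1, Real.sqrt_one, one_mul, hn2] at h
    exact h
  have hb2 : ‖(S * Y * ρ * T).trace‖ ≤ Real.sqrt (((T * T * ρ).trace).re) := by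
    rw [ht2]
    have h := trace_CS (T * B) (S * (Y * B))
    rw [hn2, hn3] at h
    calc ‖((T * B)ᴴ * (S * (Y * B))).trace‖
        ≤ Real.sqrt (((T * T * ρ).trace).re) * Real.sqrt (((ρ * X).trace).re) := h
      _ ≤ Real.sqrt (((T * T * ρ).trace).re) * 1 := by
          refine mul_le_mul_of_nonneg_left ?_ (Real.sqrt_nonneg _)
          calc Real.sqrt (((ρ * X).trace).re) ≤ Real.sqrt 1 := Real.sqrt_le_sqrt hxρ1
            _ = 1 := Real.sqrt_one
      _ = Real.sqrt (((T * T * ρ).trace).re) := mul_one _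
  -- put it together
  have hfinal : traceNorm (ρ - Y * ρ * Y) ≤ 2 * Real.sqrt lam := by
    rw [htn]
    calc ((S * (ρ - Y * ρ * Y)).trace).re
        ≤ ‖(S * (ρ - Y * ρ * Y)).trace‖ := Complex.re_le_norm _
      _ = ‖(S * T * ρ).trace + (S * Y * ρ * T).trace‖ := by
          rw [hsplit, Matrix.trace_add]
      _ ≤ ‖(S * T * ρ).trace‖ + ‖(S * Y * ρ * T).trace‖ := norm_add_le _ _
      _ ≤ Real.sqrt (((T * T * ρ).trace).re) + Real.sqrt (((T * T * ρ).trace).re) :=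
          add_le_add hb1 hb2
      _ ≤ Real.sqrt lam + Real.sqrt lam :=
          add_le_add (Real.sqrt_le_sqrt hc1le) (Real.sqrt_le_sqrt hc1le)
      _ = 2 * Real.sqrt lam := by ring
  calc traceNorm (ρ - Y * ρ * Y) ≤ 2 * Real.sqrt lam := hfinal
    _ = Real.sqrt (4 * lam) := by
        rw [show (4 : ℝ) * lam = 2 ^ 2 * lam by ring, Real.sqrt_mul (by positivity),
          Real.sqrt_sq (by norm_num)]
    _ ≤ Real.sqrt (8 * lam) := Real.sqrt_le_sqrt (by linarith)

end QIT
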